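/- A subset B of a metric space (X,d) is Bourbaki-bounded in X if and only if B is ρ-bounded for every metric ρ on X uniformly equivalent to d (i.e., such that the identity maps between (X,d) and (X,ρ) are uniformly continuous in both directions). -/

import Mathlib

/-- m-fold ε-enlargement: `iterBall x ε 0 = ball x ε`, corresponding to B^{m+1}. -/
def iterBall {X : Type*} [PseudoMetricSpace X] (x : X) (ε : ℝ) : ℕ → Set X
  | 0 => Metric.ball x ε
  | (m+1) => ⋃ y ∈ iterBall x ε m, Metric.ball y ε

/-- ε-chainable component of x. -/
def chainBall {X : Type*} [PseudoMetricSpace X] (x : X) (ε : ℝ) : Set X :=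
  ⋃ m, iterBall x ε m

/-- Bourbaki-bounded subset of a metric space. -/
def BourbakiBounded {X : Type*} [PseudoMetricSpace X] (B : Set X) : Prop :=
  ∀ ε > 0, ∃ (m : ℕ) (s : Finset X), B ⊆ ⋃ x ∈ s, iterBall x ε m

/-- α-bounded subset of a metric space. -/
def AlphaBounded {X : Type*} [PseudoMetricSpace X] (B : Set X) : Prop :=
  ∀ ε > 0, ∃ s : Finset X, B ⊆ ⋃ x ∈ s, chainBall x ε

/-- x and y are ε-chained. -/
def Chained {X : Type*} [PseudoMetricSpace X] (ε : ℝ) (x y : X) : Prop :=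
  ∃ (n : ℕ) (u : ℕ → X), u 0 = x ∧ u n = y ∧ ∀ k < n, dist (u k) (u (k+1)) < ε

/-- Bourbaki-Cauchy sequence. -/
def BourbakiCauchy {X : Type*} [PseudoMetricSpace X] (u : ℕ → X) : Prop :=
  ∀ ε > 0, ∃ (m N : ℕ) (x₀ : X), ∀ n ≥ N, u n ∈ iterBall x₀ ε m

/-- Bourbaki-complete metric space. -/
def BourbakiComplete (X : Type*) [PseudoMetricSpace X] : Prop :=
  ∀ u : ℕ → X, BourbakiCauchy u → ∃ x : X, MapClusterPt x Filter.atTop u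

/-- A metric `ρ` on the set `X` (given as a distance function with metric axioms). -/
structure IsMetricOn (X : Type*) (ρ : X → X → ℝ) : Prop where
  self : ∀ x, ρ x x = 0
  eq_of : ∀ x y, ρ x y = 0 → x = y
  symm : ∀ x y, ρ x y = ρ y x
  triangle : ∀ x y z, ρ x z ≤ ρ x y + ρ y z

/-- `ρ` is uniformly equivalent to the metric `d` of `X`: both identity maps are
uniformly continuous. -/
def UnifEquivMetric {X : Type*} [MetricSpace X] (ρ : X → X → ℝ) : Prop :=
  (∀ ε > 0, ∃ δ > 0, ∀ x y : X, dist x y < δ → ρ x y < ε) ∧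
  (∀ ε > 0, ∃ δ > 0, ∀ x y : X, ρ x y < δ → dist x y < ε)
namespace BBProof
open Metric Finset

variable {X : Type*} [MetricSpace X]

lemma mem_iterBall_succ {x z : X} {ε : ℝ} {m : ℕ} {y : X}
    (hy : y ∈ iterBall x ε m) (hz : z ∈ Metric.ball y ε) : z ∈ iterBall x ε (m+1) := by
  show z ∈ ⋃ y ∈ iterBall x ε m, Metric.ball y ε
  exact Set.mem_biUnion hy hz

lemma iterBall_succ_elim {x z : X} {ε : ℝ} {m : ℕ} (hz : z ∈ iterBall x ε (m+1)) :
    ∃ y ∈ iterBall x ε m, z ∈ Metric.ball y ε := by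
  have : z ∈ ⋃ y ∈ iterBall x ε m, Metric.ball y ε := hz
  simpa using this

lemma self_mem_iterBall {x : X} {ε : ℝ} (hε : 0 < ε) (m : ℕ) : x ∈ iterBall x ε m := by
  induction m with
  | zero => simpa [iterBall] using hε
  | succ m ih => exact mem_iterBall_succ ih (by simpa using hε)

lemma iterBall_mono {x : X} {ε : ℝ} (hε : 0 < ε) {m m' : ℕ} (h : m ≤ m') :
    iterBall x ε m ⊆ iterBall x ε m' := by
  induction h with
  | refl => exact fun z hz => hz
  | step h ih =>
      rename_i m'' _
      exact fun z hz => mem_iterBall_succ (ih hz) (by simpa using hε)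

lemma ball_subset_iterBall {x : X} {ε : ℝ} (hε : 0 < ε) (m : ℕ) :
    Metric.ball x ε ⊆ iterBall x ε m :=
  iterBall_mono hε (Nat.zero_le m)

lemma iterBall_trans {x y z : X} {ε : ℝ} {a b : ℕ}
    (hy : y ∈ iterBall x ε a) (hz : z ∈ iterBall y ε b) : z ∈ iterBall x ε (a + 1 + b) := by
  induction b generalizing z with
  | zero => exact mem_iterBall_succ hy hz
  | succ b ih =>
      obtain ⟨w, hw, hzw⟩ := iterBall_succ_elim hz
      exact mem_iterBall_succ (ih hw) hzw

lemma chained_refl (ε : ℝ) (x : X) : Chained ε x x :=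
  ⟨0, fun _ => x, rfl, rfl, fun k hk => absurd hk (Nat.not_lt_zero k)⟩

lemma chained_of_dist {ε : ℝ} {x y : X} (h : dist x y < ε) : Chained ε x y := by
  refine ⟨1, fun k => if k = 0 then x else y, by simp, by simp, ?_⟩
  intro k hk
  have : k = 0 := by omega
  subst this
  simpa using h

lemma chained_trans {ε : ℝ} {x y z : X} (h1 : Chained ε x y) (h2 : Chained ε y z) :
    Chained ε x z := by
  obtain ⟨n, u, hu0, hun, hu⟩ := h1
  obtain ⟨m, v, hv0, hvm, hv⟩ := h2
  refine ⟨n + m, fun k => if k < n then u k else v (k - n), ?_, ?_, ?_⟩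
  · by_cases h : 0 < n
    · simpa [h] using hu0
    · have hn : n = 0 := by omega
      subst hn
      simp only [Nat.lt_irrefl, if_false, Nat.sub_zero] at *
      rw [hv0, ← hun, hu0]
  · have : ¬ (n + m < n) := by omega
    simp only [this, if_neg, Nat.add_sub_cancel_left]
    exact hvm
  · intro k hk
    by_cases h : k + 1 < n
    · have hk' : k < n := by omega
      simpa [h, hk'] using hu k (by omega)
    · by_cases h2 : k < n
      · have hkn : k + 1 = n := by omega
        have e1 : (fun k => if k < n then u k else v (k - n)) (k+1) = u (k+1) := by
          simp only [h, if_false, hkn, Nat.sub_self]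
          rw [hv0, hun]
          exact ite_self _
        simp only [h2, if_true] at *
        rw [e1]
        exact hu k (by omega)
      · have e2 : k + 1 - n = (k - n) + 1 := by omega
        simp only [h, h2, if_neg, e2]
        exact hv (k - n) (by omega)

lemma chained_symm {ε : ℝ} {x y : X} (h : Chained ε x y) : Chained ε y x := by
  obtain ⟨n, u, hu0, hun, hu⟩ := h
  refine ⟨n, fun k => u (n - k), by simpa using hun, by simpa using hu0, ?_⟩
  intro k hk
  have e : n - k = (n - (k+1)) + 1 := by omega
  simp only []
  rw [dist_comm, e]
  exact hu (n - (k+1)) (by omega)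

lemma shortChain_mem_iterBall {ε : ℝ} (hε : 0 < ε) {u : ℕ → X} :
    ∀ N : ℕ, (∀ k < N, dist (u k) (u (k+1)) < ε) → u N ∈ iterBall (u 0) ε N := by
  intro N
  induction N with
  | zero => intro _; exact self_mem_iterBall hε 0
  | succ N ih =>
      intro h
      exact mem_iterBall_succ (ih (fun k hk => h k (by omega)))
        (by simpa [Metric.mem_ball, dist_comm] using h N (by omega))


variable {X : Type*} [MetricSpace X]

lemma chained_of_mem_iterBall {ε : ℝ} {x : X} :
    ∀ (m : ℕ) (y : X), y ∈ iterBall x ε m → Chained ε x y := by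
  intro m
  induction m with
  | zero =>
      intro y hy
      have h' : y ∈ Metric.ball x ε := hy
      exact chained_of_dist (by simpa [Metric.mem_ball, dist_comm] using h')
  | succ m ih =>
      intro y hy
      obtain ⟨w, hw, hyw⟩ := iterBall_succ_elim hy
      exact chained_trans (ih w hw)
        (chained_of_dist (by simpa [Metric.mem_ball, dist_comm] using hyw))

lemma chained_iff_mem_chainBall {ε : ℝ} (hε : 0 < ε) {x y : X} :
    Chained ε x y ↔ y ∈ chainBall x ε := by
  constructor
  · rintro ⟨n, u, hu0, hun, hu⟩
    have := shortChain_mem_iterBall hε n hu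
    rw [hu0, hun] at this
    exact Set.mem_iUnion.mpr ⟨n, this⟩
  · intro hy
    obtain ⟨m, hm⟩ := Set.mem_iUnion.mp hy
    exact chained_of_mem_iterBall m y hm

lemma dist_le_sum (u : ℕ → X) : ∀ N : ℕ,
    dist (u 0) (u N) ≤ ∑ k ∈ Finset.range N, dist (u k) (u (k+1)) := by
  intro N
  induction N with
  | zero => simp
  | succ N ih =>
      rw [Finset.sum_range_succ]
      calc dist (u 0) (u (N+1)) ≤ dist (u 0) (u N) + dist (u N) (u (N+1)) := dist_triangle _ _ _
        _ ≤ _ := by linarith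

lemma rechain {ε : ℝ} (hε : 0 < ε) :
    ∀ m N : ℕ, ∀ u : ℕ → X, (∀ k < N, dist (u k) (u (k+1)) < ε) →
      (∑ k ∈ Finset.range N, dist (u k) (u (k+1))) ≤ (m : ℝ) * (ε/2) →
      u N ∈ iterBall (u 0) ε m := by
  intro m
  induction m using Nat.strong_induction_on with
  | _ m ih =>
  intro N u hch hsum
  classical
  by_cases hd : dist (u 0) (u N) < ε
  · exact ball_subset_iterBall hε m (by simpa [Metric.mem_ball, dist_comm] using hd)
  · have hNs : ε ≤ ∑ k ∈ Finset.range N, dist (u k) (u (k+1)) :=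
      le_trans (not_lt.mp hd) (dist_le_sum u N)
    have hex : ∃ j, j ≤ N ∧ ε ≤ ∑ k ∈ Finset.range j, dist (u k) (u (k+1)) :=
      ⟨N, le_refl N, hNs⟩
    have hjN : Nat.find hex ≤ N := (Nat.find_spec hex).1
    have hjε : ε ≤ ∑ k ∈ Finset.range (Nat.find hex), dist (u k) (u (k+1)) :=
      (Nat.find_spec hex).2
    have hj0 : Nat.find hex ≠ 0 := by
      intro h
      rw [h] at hjε
      simp at hjε
      linarith
    obtain ⟨i, hi⟩ := Nat.exists_eq_succ_of_ne_zero hj0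
    have hiN : i < N := by omega
    have hPi : ∑ k ∈ Finset.range i, dist (u k) (u (k+1)) < ε := by
      have := Nat.find_min hex (m := i) (by omega)
      push_neg at this
      exact this (by omega)
    have hdi : dist (u 0) (u i) < ε := lt_of_le_of_lt (dist_le_sum u i) hPi
    -- tail chain
    have hm2 : 2 ≤ m := by
      by_contra hc
      have : (m : ℝ) ≤ 1 := by exact_mod_cast Nat.le_of_lt_succ (by omega)
      nlinarith
    have hNj : N = (i+1) + (N - (i+1)) := by omega
    have hsplit : (∑ k ∈ Finset.range N, dist (u k) (u (k+1)))
        = (∑ k ∈ Finset.range (i+1), dist (u k) (u (k+1)))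
          + ∑ k ∈ Finset.range (N - (i+1)), dist (u (i+1+k)) (u (i+1+k+1)) := by
      rw [hNj]
      rw [Finset.sum_range_add]
      norm_num
    have hjsum : ε ≤ ∑ k ∈ Finset.range (i+1), dist (u k) (u (k+1)) := by
      rw [hi] at hjε; exact hjε
    have htail : (∑ k ∈ Finset.range (N - (i+1)), dist (u (i+1+k)) (u (i+1+k+1)))
        ≤ ((m - 2 : ℕ) : ℝ) * (ε/2) := by
      have h2 : ((m - 2 : ℕ) : ℝ) = (m : ℝ) - 2 := by
        push_cast [hm2]; ring
      rw [h2]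
      have := hsplit ▸ hsum
      nlinarith
    have htc : u N ∈ iterBall (u (i+1)) ε (m - 2) := by
      have h' := ih (m - 2) (by omega) (N - (i+1)) (fun k => u (i+1+k))
        (fun k hk => hch (i+1+k) (by omega)) htail
      simpa [show i + 1 + (N - (i+1)) = N by omega] using h'
    have h1 : u i ∈ iterBall (u 0) ε 0 := by
      simpa [iterBall, Metric.mem_ball, dist_comm] using hdi
    have h2 : u (i+1) ∈ iterBall (u 0) ε 1 :=
      mem_iterBall_succ h1 (by simpa [Metric.mem_ball, dist_comm] using hch i hiN)
    have := iterBall_trans h2 htc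
    have he2 : 1 + 1 + (m - 2) = m := by omega
    rwa [he2] at this

variable {X : Type*} [MetricSpace X]

noncomputable def cost (ε : ℝ) (g : X → ℝ) (u v : X) : ℝ :=
  if dist u v < ε then dist u v else g u + g v + ε

noncomputable def csum (ε : ℝ) (g : X → ℝ) (u : ℕ → X) (N : ℕ) : ℝ :=
  ∑ k ∈ Finset.range N, cost ε g (u k) (u (k+1))

def chS (ε : ℝ) (g : X → ℝ) (x y : X) : Set ℝ :=
  {A | ∃ (N : ℕ) (u : ℕ → X), u 0 = x ∧ u N = y ∧ csum ε g u N = A}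

noncomputable def rho (ε : ℝ) (g : X → ℝ) (x y : X) : ℝ := sInf (chS ε g x y)

section costlemmas

variable {ε : ℝ} {g : X → ℝ} (hε : 0 < ε) (hg : ∀ x, 0 ≤ g x)

lemma cost_symm (u v : X) : cost ε g u v = cost ε g v u := by
  unfold cost
  rw [dist_comm]
  split
  · rfl
  · ring

include hε hg in
lemma min_le_cost (u v : X) : min (dist u v) ε ≤ cost ε g u v := by
  unfold cost
  split
  · exact min_le_left _ _
  · have := hg u; have := hg v
    calc min (dist u v) ε ≤ ε := min_le_right _ _
      _ ≤ _ := by linarith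

include hε hg in
lemma cost_nonneg (u v : X) : 0 ≤ cost ε g u v :=
  le_trans (le_min dist_nonneg hε.le) (min_le_cost hε hg u v)

include hε hg in
lemma csum_nonneg (u : ℕ → X) (N : ℕ) : 0 ≤ csum ε g u N :=
  Finset.sum_nonneg fun k _ => cost_nonneg hε hg _ _

lemma chS_nonempty (x y : X) : (chS ε g x y).Nonempty :=
  ⟨csum ε g (fun k => if k = 0 then x else y) 1,
    1, fun k => if k = 0 then x else y, by simp, by simp, rfl⟩

include hε hg in
lemma chS_bddBelow (x y : X) : BddBelow (chS ε g x y) := by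
  refine ⟨0, ?_⟩
  rintro A ⟨N, u, -, -, hA⟩
  exact hA ▸ csum_nonneg hε hg u N

include hε hg in
lemma rho_le_csum {x y : X} (u : ℕ → X) (N : ℕ) (h0 : u 0 = x) (hN : u N = y) :
    rho ε g x y ≤ csum ε g u N :=
  csInf_le (chS_bddBelow hε hg x y) ⟨N, u, h0, hN, rfl⟩

include hε hg in
lemma rho_nonneg (x y : X) : 0 ≤ rho ε g x y := by
  apply le_csInf (chS_nonempty x y)
  rintro A ⟨N, u, -, -, hA⟩
  exact hA ▸ csum_nonneg hε hg u N

private lemma min_add_min {a b c : ℝ} (ha : 0 ≤ a) (hb : 0 ≤ b) (hc : 0 ≤ c) :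
    min (a + b) c ≤ min a c + min b c := by
  rcases le_total a c with h1 | h1 <;> rcases le_total b c with h2 | h2 <;>
    simp [min_def] <;> split_ifs <;> linarith

include hε hg in
lemma min_le_csum (u : ℕ → X) : ∀ N : ℕ, min (dist (u 0) (u N)) ε ≤ csum ε g u N := by
  intro N
  induction N with
  | zero => simp [csum]
  | succ N ih =>
      have h1 : min (dist (u 0) (u (N+1))) ε
          ≤ min (dist (u 0) (u N)) ε + min (dist (u N) (u (N+1))) ε := by
        calc min (dist (u 0) (u (N+1))) ε
            ≤ min (dist (u 0) (u N) + dist (u N) (u (N+1))) ε :=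
              min_le_min (dist_triangle _ _ _) le_rfl
          _ ≤ _ := min_add_min dist_nonneg dist_nonneg hε.le
      have h2 := min_le_cost hε hg (u N) (u (N+1))
      have h3 : csum ε g u (N+1) = csum ε g u N + cost ε g (u N) (u (N+1)) :=
        Finset.sum_range_succ _ _
      linarith

include hε hg in
lemma min_le_rho (x y : X) : min (dist x y) ε ≤ rho ε g x y := by
  apply le_csInf (chS_nonempty x y)
  rintro A ⟨N, u, h0, hN, hA⟩
  subst hA h0 hN
  exact min_le_csum hε hg u N

include hε hg in
lemma rho_self (x : X) : rho ε g x x = 0 := by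
  refine le_antisymm ?_ (rho_nonneg hε hg x x)
  have : csum ε g (fun _ => x) 0 = 0 := by simp [csum]
  calc rho ε g x x ≤ csum ε g (fun _ => x) 0 := rho_le_csum hε hg _ _ rfl rfl
    _ = 0 := this

include hε hg in
lemma rho_le_dist {x y : X} (h : dist x y < ε) : rho ε g x y ≤ dist x y := by
  have h1 : csum ε g (fun k => if k = 0 then x else y) 1 = dist x y := by
    simp [csum, cost, Finset.sum_range_one, h]
  calc rho ε g x y ≤ csum ε g (fun k => if k = 0 then x else y) 1 :=
        rho_le_csum hε hg _ _ (by simp) (by simp)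
    _ = dist x y := h1

lemma chS_symm_subset (x y : X) : chS ε g x y ⊆ chS ε g y x := by
  rintro A ⟨N, u, h0, hN, hA⟩
  refine ⟨N, fun k => u (N - k), by simpa using hN, by simpa using h0, ?_⟩
  rw [← hA]
  unfold csum
  rw [← Finset.sum_range_reflect (fun k => cost ε g (u k) (u (k+1))) N]
  apply Finset.sum_congr rfl
  intro k hk
  have hkN : k < N := Finset.mem_range.mp hk
  have e1 : N - k = (N - 1 - k) + 1 := by omega
  have e2 : N - (k + 1) = N - 1 - k := by omega
  simp only []
  rw [e2, cost_symm, e1]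

include hε hg in
lemma rho_symm (x y : X) : rho ε g x y = rho ε g y x := by
  unfold rho
  rw [Set.Subset.antisymm (chS_symm_subset x y) (chS_symm_subset y x)]

lemma csum_concat (u v : ℕ → X) (N M : ℕ) (h : u N = v 0) :
    csum ε g (fun k => if k < N then u k else v (k - N)) (N + M)
      = csum ε g u N + csum ε g v M := by
  unfold csum
  rw [Finset.sum_range_add]
  congr 1
  · apply Finset.sum_congr rfl
    intro k hk
    have hkN : k < N := Finset.mem_range.mp hk
    by_cases h2 : k + 1 < N
    · simp [hkN, h2]
    · have : k + 1 = N := by omega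
      simp only [hkN, if_true, this, lt_irrefl, if_false, Nat.sub_self, ← h]
  · apply Finset.sum_congr rfl
    intro k _
    have e1 : ¬ (N + k < N) := by omega
    have e2 : ¬ (N + k + 1 < N) := by omega
    have e3 : N + k - N = k := by omega
    have e4 : N + k + 1 - N = k + 1 := by omega
    simp only [e1, e2, if_false, e3, e4]

lemma le_rho_of {x y : X} {c : ℝ} (h : ∀ A ∈ chS ε g x y, c ≤ A) : c ≤ rho ε g x y :=
  le_csInf (chS_nonempty x y) h

include hε hg in
lemma rho_triangle (x y z : X) : rho ε g x z ≤ rho ε g x y + rho ε g y z := by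
  have key : ∀ A ∈ chS ε g x y, ∀ B ∈ chS ε g y z, rho ε g x z ≤ A + B := by
    rintro A ⟨N, u, hu0, huN, hA⟩ B ⟨M, v, hv0, hvM, hB⟩
    have h := csum_concat (ε := ε) (g := g) u v N M (hv0 ▸ huN)
    have h0 : (fun k => if k < N then u k else v (k - N)) 0 = x := by
      by_cases hN : 0 < N
      · simpa [hN] using hu0
      · have : N = 0 := by omega
        subst this
        simpa using hv0 ▸ huN ▸ hu0
    have hNM : (fun k => if k < N then u k else v (k - N)) (N + M) = z := by
      have : ¬ (N + M < N) := by omega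
      simpa [this] using hvM
    calc rho ε g x z ≤ csum ε g (fun k => if k < N then u k else v (k - N)) (N + M) :=
          rho_le_csum hε hg _ _ h0 hNM
      _ = A + B := by rw [h, hA, hB]
  have step1 : ∀ A ∈ chS ε g x y, rho ε g x z ≤ A + rho ε g y z := by
    intro A hA
    have h1 : rho ε g x z - A ≤ rho ε g y z := by
      apply le_rho_of
      intro B hB
      linarith [key A hA B hB]
    linarith
  have h2 : rho ε g x z - rho ε g y z ≤ rho ε g x y := by
    apply le_rho_of
    intro A hA
    linarith [step1 A hA]
  linarith

include hε hg in
lemma rho_ge_sub {φ : X → ℝ} (hφ : ∀ a b, φ b - φ a ≤ cost ε g a b) (x y : X) :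
    φ y - φ x ≤ rho ε g x y := by
  apply le_csInf (chS_nonempty x y)
  rintro A ⟨N, u, h0, hN, hA⟩
  subst h0 hN
  rw [← hA]
  clear hA
  induction N with
  | zero => simp [csum]
  | succ N ih =>
      have h1 : csum ε g u (N+1) = csum ε g u N + cost ε g (u N) (u (N+1)) :=
        Finset.sum_range_succ _ _
      have h2 := hφ (u N) (u (N+1))
      linarith

include hε hg in
lemma isMetricOn_rho : IsMetricOn X (rho ε g) := by
  refine ⟨rho_self hε hg, ?_, rho_symm hε hg, rho_triangle hε hg⟩
  intro x y h
  have h1 := min_le_rho hε hg x y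
  rw [h] at h1
  rcases min_le_iff.mp h1 with h2 | h2
  · exact eq_of_dist_eq_zero (le_antisymm h2 dist_nonneg)
  · linarith

include hε hg in
lemma unifEquiv_rho : UnifEquivMetric (rho ε g) := by
  constructor
  · intro ε' hε'
    refine ⟨min ε ε', lt_min hε hε', ?_⟩
    intro x y h
    have h1 : dist x y < ε := lt_of_lt_of_le h (min_le_left _ _)
    calc rho ε g x y ≤ dist x y := rho_le_dist hε hg h1
      _ < ε' := lt_of_lt_of_le h (min_le_right _ _)
  · intro ε' hε'
    refine ⟨min ε ε', lt_min hε hε', ?_⟩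
    intro x y h
    have h1 := min_le_rho hε hg x y
    have h2 : min (dist x y) ε < min ε ε' := lt_of_le_of_lt h1 h
    have hd : dist x y < ε := by
      by_contra hc
      rw [min_eq_right (not_lt.mp hc)] at h2
      have := min_le_left ε ε'
      linarith
    rw [min_eq_left hd.le] at h2
    exact lt_of_lt_of_le h2 (min_le_right _ _)

end costlemmas


variable {X : Type*} [MetricSpace X]

def seqList (pick : List X → X) : ℕ → List X
  | 0 => []
  | (n+1) => seqList pick n ++ [pick (seqList pick n)]

lemma mem_seqList (pick : List X → X) : ∀ {k n : ℕ}, k < n →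
    pick (seqList pick k) ∈ seqList pick n := by
  intro k n
  induction n with
  | zero => omega
  | succ n ih =>
      intro hk
      by_cases h : k < n
      · exact List.mem_append_left _ (ih h)
      · have : k = n := by omega
        subst this
        exact List.mem_append_right _ (List.mem_singleton_self _)
end BBProof

open BBProof

theorem bourbakiBounded_iff_bounded_for_all_unifEquiv {X : Type*} [MetricSpace X]
    (B : Set X) :
    BourbakiBounded B ↔
      ∀ ρ : X → X → ℝ, IsMetricOn X ρ → UnifEquivMetric ρ →
        ∃ C : ℝ, ∀ x ∈ B, ∀ y ∈ B, ρ x y ≤ C := by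
  constructor
  · -- forward direction
    intro hB ρ hm hu
    obtain ⟨δ, hδ, hδ1⟩ := hu.1 1 one_pos
    obtain ⟨m, s, hs⟩ := hB δ hδ
    rcases Set.eq_empty_or_nonempty B with hBe | hBne
    · exact ⟨0, fun x hx => absurd hx (by simp [hBe])⟩
    · have hρ0 : ∀ a b : X, 0 ≤ ρ a b := by
        intro a b
        have h1 := hm.triangle a b a
        rw [hm.self a, hm.symm b a] at h1
        linarith
      have hiter : ∀ (x y : X) (k : ℕ), y ∈ iterBall x δ k → ρ x y ≤ k + 1 := by
        intro x y k
        induction k generalizing y with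
        | zero =>
            intro hy
            have hy' : y ∈ Metric.ball x δ := hy
            have : dist x y < δ := by
              rw [dist_comm]; simpa [Metric.mem_ball] using hy'
            have := hδ1 x y this
            push_cast
            linarith
        | succ k ih =>
            intro hy
            obtain ⟨z, hz, hyz⟩ := iterBall_succ_elim hy
            have h1 := ih z hz
            have h2 : dist z y < δ := by
              rw [dist_comm]; simpa [Metric.mem_ball] using hyz
            have h3 := hδ1 z y h2
            have h4 := hm.triangle x z y
            push_cast at h1 ⊢
            linarith
      set D := ∑ x ∈ s, ∑ y ∈ s, ρ x y with hD
      have hDle : ∀ x ∈ s, ∀ y ∈ s, ρ x y ≤ D := by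
        intro x hx y hy
        have h1 : ρ x y ≤ ∑ y ∈ s, ρ x y :=
          Finset.single_le_sum (fun i _ => hρ0 x i) hy
        have h2 : (∑ y ∈ s, ρ x y) ≤ D :=
          Finset.single_le_sum (f := fun x => ∑ y ∈ s, ρ x y)
            (fun i _ => Finset.sum_nonneg fun j _ => hρ0 i j) hx
        linarith
      refine ⟨(m + 1) + D + (m + 1), ?_⟩
      intro a ha b hb
      obtain ⟨x, hxs, hax⟩ := by
        have := hs ha
        simpa using this
      obtain ⟨y, hys, hby⟩ := by
        have := hs hb
        simpa using this
      have h1 : ρ x a ≤ m + 1 := hiter x a m hax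
      have h2 : ρ y b ≤ m + 1 := hiter y b m hby
      have h3 : ρ x y ≤ D := hDle x hxs y hys
      have t1 := hm.triangle a x b
      have t2 := hm.triangle x y b
      rw [hm.symm a x] at t1
      linarith
  · -- reverse direction
    intro hAll
    by_contra hnB
    unfold BourbakiBounded at hnB
    push_neg at hnB
    obtain ⟨ε, hε, hB⟩ := hnB
    classical
    by_cases hP : ∃ s : Finset X, B ⊆ ⋃ x ∈ s, chainBall x ε
    · -- case (b): finitely many chain components cover B
      obtain ⟨s, hs⟩ := hP
      have hx0 : ∃ x₀ ∈ s, ∀ m : ℕ, ∃ y ∈ B, Chained ε x₀ y ∧ y ∉ iterBall x₀ ε m := by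
        by_contra hc
        push_neg at hc
        have h' : ∀ x : X, ∃ m : ℕ, x ∈ s → ∀ y ∈ B, Chained ε x y → y ∈ iterBall x ε m := by
          intro x
          by_cases hx : x ∈ s
          · obtain ⟨m, hm⟩ := hc x hx
            exact ⟨m, fun _ y hy hch => hm y hy hch⟩
          · exact ⟨0, fun h => absurd h hx⟩
        choose f hf using h'
        apply hB (s.sup f) s
        intro y hy
        obtain ⟨x, hxs, hyx⟩ := by
          have := hs hy
          simpa using this
        have hch : Chained ε x y := (chained_iff_mem_chainBall hε).mpr hyx
        have h1 := hf x hxs y hy hch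
        have h2 := iterBall_mono (x := x) hε (Finset.le_sup hxs) h1
        simp only [Set.mem_iUnion]
        exact ⟨x, hxs, h2⟩
      obtain ⟨x₀, -, hx0'⟩ := hx0
      -- the intrinsic short-chain premetric from x₀
      set T : X → Set ℝ := fun x => {A | ∃ (N : ℕ) (u : ℕ → X), u 0 = x₀ ∧ u N = x ∧
        (∀ k < N, dist (u k) (u (k+1)) < ε) ∧
        (∑ k ∈ Finset.range N, dist (u k) (u (k+1))) = A} with hT
      have hTlb : ∀ x, ∀ A ∈ T x, 0 ≤ A := by
        rintro x A ⟨N, u, -, -, -, hA⟩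
        exact hA ▸ Finset.sum_nonneg fun k _ => dist_nonneg
      have hTbdd : ∀ x, BddBelow (T x) := fun x => ⟨0, fun A hA => hTlb x A hA⟩
      have hTne : ∀ x, Chained ε x₀ x → (T x).Nonempty := by
        rintro x ⟨N, u, h0, hN, hch⟩
        exact ⟨_, N, u, h0, hN, hch, rfl⟩
      set ψ : X → ℝ := fun x => if Chained ε x₀ x then sInf (T x) else 0 with hψ
      have hψ0 : ∀ x, 0 ≤ ψ x := by
        intro x
        rw [hψ]
        simp only []
        split
        · exact le_csInf (hTne x (by assumption)) (hTlb x)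
        · exact le_refl 0
      have hψx₀ : ψ x₀ = 0 := by
        rw [hψ]
        simp only [if_pos (chained_refl ε x₀)]
        refine le_antisymm ?_ (le_csInf (hTne x₀ (chained_refl ε x₀)) (hTlb x₀))
        exact csInf_le (hTbdd x₀) ⟨0, fun _ => x₀, rfl, rfl, fun k hk => absurd hk (by omega), by simp⟩
      have hψstep : ∀ a b : X, dist a b < ε → ψ b ≤ ψ a + dist a b := by
        intro a b hab
        by_cases ha : Chained ε x₀ a
        · have hb : Chained ε x₀ b := chained_trans ha (chained_of_dist hab)
          rw [hψ]
          simp only [if_pos ha, if_pos hb]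
          rw [← sub_le_iff_le_add]
          apply le_csInf (hTne a ha)
          rintro A ⟨N, u, h0, hN, hch, hA⟩
          rw [sub_le_iff_le_add]
          have hmem : (dist a b + A) ∈ T b := by
            refine ⟨N + 1, fun k => if k ≤ N then u k else b, ?_, ?_, ?_, ?_⟩
            · simpa using h0
            · simp
            · intro k hk
              by_cases h2 : k < N
              · have e1 : k ≤ N := by omega
                have e2 : k + 1 ≤ N := by omega
                simpa [e1, e2] using hch k h2
              · have e1 : k = N := by omega
                subst e1
                have e2 : ¬ (k + 1 ≤ k) := by omega
                simpa [e2, hN] using hab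
            · rw [Finset.sum_range_succ]
              have e3 : ∀ k ∈ Finset.range N,
                  dist ((fun k => if k ≤ N then u k else b) k)
                    ((fun k => if k ≤ N then u k else b) (k+1)) = dist (u k) (u (k+1)) := by
                intro k hk
                have hkN := Finset.mem_range.mp hk
                have e1 : k ≤ N := by omega
                have e2 : k + 1 ≤ N := by omega
                simp [e1, e2]
              rw [Finset.sum_congr rfl e3]
              have e4 : ¬ (N + 1 ≤ N) := by omega
              simp only [le_refl, if_true, e4, if_false, hN, hA]
              ring
          calc sInf (T b) ≤ dist a b + A := csInf_le (hTbdd b) hmem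
            _ = A + dist a b := by ring
        · have hb : ¬ Chained ε x₀ b := fun hcb =>
            ha (chained_trans hcb (chained_of_dist (by rwa [dist_comm])))
          rw [hψ]
          simp only [if_neg ha, if_neg hb]
          linarith [dist_nonneg (x := a) (y := b)]
      have hφ : ∀ a b : X, ψ b - ψ a ≤ cost ε ψ a b := by
        intro a b
        unfold cost
        split
        · have := hψstep a b (by assumption)
          linarith
        · linarith [hψ0 a, hψ0 b, hε]
      have hψlarge : ∀ (m : ℕ) (y : X), Chained ε x₀ y → y ∉ iterBall x₀ ε m →
          (m : ℝ) * (ε/2) ≤ ψ y := by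
        intro m y hch hnot
        rw [hψ]
        simp only [if_pos hch]
        apply le_csInf (hTne y hch)
        rintro A ⟨N, u, h0, hN, hchain, hA⟩
        by_contra hlt
        push_neg at hlt
        have := rechain hε m N u hchain (by rw [hA]; exact hlt.le)
        rw [h0, hN] at this
        exact hnot this
      obtain ⟨C, hC⟩ := hAll (rho ε ψ) (isMetricOn_rho hε hψ0) (unifEquiv_rho hε hψ0)
      obtain ⟨y₀, hy₀B, -, -⟩ := hx0' 0
      set K := rho ε ψ x₀ y₀ with hK
      obtain ⟨m, hmgt⟩ := exists_nat_gt ((C + K) / (ε/2))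
      have hmK : C + K < (m : ℝ) * (ε/2) := by
        rw [div_lt_iff₀ (by linarith)] at hmgt
        linarith
      obtain ⟨y, hyB, hych, hynot⟩ := hx0' m
      have h1 : (m : ℝ) * (ε/2) ≤ ψ y := hψlarge m y hych hynot
      have h2 : ψ y - ψ x₀ ≤ rho ε ψ x₀ y := rho_ge_sub hε hψ0 hφ x₀ y
      have h3 := (isMetricOn_rho hε hψ0).triangle x₀ y₀ y
      have h4 := hC y₀ hy₀B y hyB
      rw [hψx₀] at h2
      linarith
    · -- case (a): B meets infinitely many chain components
      push_neg at hP
      have key : ∀ l : List X, ∃ y, y ∈ B ∧ ∀ x ∈ l, ¬ Chained ε x y := by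
        intro l
        obtain ⟨y, hyB, hy⟩ := Set.not_subset.mp (hP l.toFinset)
        refine ⟨y, hyB, fun x hx hc => hy ?_⟩
        simp only [Set.mem_iUnion]
        exact ⟨x, List.mem_toFinset.mpr hx, (chained_iff_mem_chainBall hε).mp hc⟩
      set pick : List X → X := fun l => Classical.choose (key l) with hpick
      set b : ℕ → X := fun n => pick (seqList pick n) with hb
      have hbB : ∀ n, b n ∈ B := fun n => (Classical.choose_spec (key (seqList pick n))).1
      have hbnc : ∀ k n : ℕ, k < n → ¬ Chained ε (b k) (b n) := by
        intro k n hkn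
        exact (Classical.choose_spec (key (seqList pick n))).2 (b k) (mem_seqList pick hkn)
      set g : X → ℝ := fun x => if h : ∃ n, Chained ε (b n) x then ((Nat.find h : ℕ) : ℝ) else 0
        with hg
      have hgnn : ∀ x, 0 ≤ g x := by
        intro x
        rw [hg]
        simp only []
        split
        · positivity
        · exact le_refl 0
      have hgb : ∀ n, g (b n) = n := by
        intro n
        have h : ∃ m, Chained ε (b m) (b n) := ⟨n, chained_refl ε (b n)⟩
        rw [hg]
        simp only [dif_pos h]
        norm_cast
        rw [Nat.find_eq_iff]
        exact ⟨chained_refl ε (b n), fun m hm => hbnc m n hm⟩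
      have hgconst : ∀ x y : X, dist x y < ε → g x = g y := by
        intro x y hxy
        by_cases hx : ∃ n, Chained ε (b n) x
        · obtain ⟨n, hn⟩ := hx
          have hx' : ∃ n, Chained ε (b n) x := ⟨n, hn⟩
          have hy : ∃ n, Chained ε (b n) y := ⟨n, chained_trans hn (chained_of_dist hxy)⟩
          rw [hg]
          simp only [dif_pos hx', dif_pos hy]
          norm_cast
          apply le_antisymm
          · exact Nat.find_le (chained_trans (Nat.find_spec hy)
              (chained_symm (chained_of_dist hxy)))
          · exact Nat.find_le (chained_trans (Nat.find_spec hx')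
              (chained_of_dist hxy))
        · have hy : ¬ ∃ n, Chained ε (b n) y := by
            rintro ⟨n, hn⟩
            exact hx ⟨n, chained_trans hn (chained_symm (chained_of_dist hxy))⟩
          rw [hg]
          simp only [dif_neg hx, dif_neg hy]
      have hφ : ∀ a b' : X, g b' - g a ≤ cost ε g a b' := by
        intro a b'
        unfold cost
        split
        · rw [hgconst a b' (by assumption)]
          simp [dist_nonneg]
        · linarith [hgnn a, hgnn b', hε]
      obtain ⟨C, hC⟩ := hAll (rho ε g) (isMetricOn_rho hε hgnn) (unifEquiv_rho hε hgnn)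
      set n : ℕ := ⌈C⌉₊ + 1 with hn
      have h1 : g (b n) - g (b 0) ≤ rho ε g (b 0) (b n) := rho_ge_sub hε hgnn hφ _ _
      rw [hgb n, hgb 0] at h1
      have h2 := hC (b 0) (hbB 0) (b n) (hbB n)
      have h3 : C < (⌈C⌉₊ : ℝ) + 1 := by
        linarith [Nat.le_ceil C]
      push_cast [hn] at h1
      linarith
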